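/- Let q be a prime power with q ≡ 3 (mod 4), and consider the natural action of SL₂(F_q) on the projective line ℙ¹(F_q) (the projectivization of F_q²), which factors through PSL₂(F_q). This action is (q−2,2,1)-transitive: for any subsets A₁, A₂, A₃ and B₁, B₂, B₃ of ℙ¹(F_q) with (A₁,A₂,A₃) and (B₁,B₂,B₃) each pairwise disjoint with union ℙ¹(F_q), |A₁| = |B₁| = q−2, |A₂| = |B₂| = 2, and |A₃| = |B₃| = 1, there exists g ∈ SL₂(F_q) whose induced action on ℙ¹(F_q) maps A_i onto B_i for i = 1, 2, 3. -/

import Mathlib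

open scoped LinearAlgebra.Projectivization

/-- The action of `g ∈ SL₂(F)` on the projective line `ℙ¹(F) = ℙ F (Fin 2 → F)`,
induced by the linear action of `g` on `F²`.  (It factors through `PSL₂(F)`.) -/
noncomputable def sl2ProjAction {F : Type} [Field F]
    (g : Matrix.SpecialLinearGroup (Fin 2) F) :
    ℙ F (Fin 2 → F) → ℙ F (Fin 2 → F) :=
  Projectivization.map (Matrix.SpecialLinearGroup.toLin' g).toLinearMap
    (Matrix.SpecialLinearGroup.toLin' g).injective

namespace PSL2Aux

open Projectivization Matrix

variable {F : Type} [Field F]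

lemma sl2_coe_isUnit (g : Matrix.SpecialLinearGroup (Fin 2) F) :
    IsUnit (g : Matrix (Fin 2) (Fin 2) F) := by
  rw [Matrix.isUnit_iff_isUnit_det, g.prop]; exact isUnit_one

lemma sl2_mulVec_ne_zero (g : Matrix.SpecialLinearGroup (Fin 2) F)
    {v : Fin 2 → F} (hv : v ≠ 0) : (g : Matrix (Fin 2) (Fin 2) F) *ᵥ v ≠ 0 := by
  intro h
  exact hv (Matrix.mulVec_injective_iff_isUnit.mpr (sl2_coe_isUnit g)
    (h.trans (Matrix.mulVec_zero _).symm))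

lemma mk_congr {v w : Fin 2 → F} (hv : v ≠ 0) (hw : w ≠ 0) (h : v = w) :
    Projectivization.mk F v hv = Projectivization.mk F w hw := by
  subst h; rfl

lemma sl2ProjAction_mk (g : Matrix.SpecialLinearGroup (Fin 2) F)
    (v : Fin 2 → F) (hv : v ≠ 0) :
    sl2ProjAction g (Projectivization.mk F v hv)
      = Projectivization.mk F ((g : Matrix (Fin 2) (Fin 2) F) *ᵥ v)
          (sl2_mulVec_ne_zero g hv) := by
  unfold sl2ProjAction
  rw [Projectivization.map_mk]
  apply mk_congr
  rw [Matrix.SpecialLinearGroup.toLin'_to_linearMap]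
  exact Matrix.toLin'_apply _ _

lemma sl2ProjAction_bijective (g : Matrix.SpecialLinearGroup (Fin 2) F) :
    Function.Bijective (sl2ProjAction g) := by
  have key : ∀ (h g : Matrix.SpecialLinearGroup (Fin 2) F) (p : ℙ F (Fin 2 → F)),
      sl2ProjAction h (sl2ProjAction g p)
        = sl2ProjAction (h * g) p := by
    intro h g p
    induction p using Projectivization.ind with
    | h v hv =>
      rw [sl2ProjAction_mk, sl2ProjAction_mk, sl2ProjAction_mk]
      apply mk_congr
      rw [Matrix.mulVec_mulVec]
      rfl
  have key2 : ∀ p, sl2ProjAction (1 : Matrix.SpecialLinearGroup (Fin 2) F) p = p := by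
    intro p
    induction p using Projectivization.ind with
    | h v hv =>
      rw [sl2ProjAction_mk]
      congr 1
      simp
  refine Function.bijective_iff_has_inverse.mpr ⟨sl2ProjAction g⁻¹, fun p => ?_, fun p => ?_⟩
  · rw [key, inv_mul_cancel, key2]
  · rw [key, mul_inv_cancel, key2]

/-- From three distinct points we get a "frame": `u1, u2, u1 + u2` representatives. -/
lemma exists_frame (p1 p2 p3 : ℙ F (Fin 2 → F))
    (h12 : p1 ≠ p2) (h13 : p1 ≠ p3) (h23 : p2 ≠ p3) :
    ∃ (u1 u2 : Fin 2 → F) (hli : LinearIndependent F ![u1, u2])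
      (h1 : u1 ≠ 0) (h2 : u2 ≠ 0) (h3 : u1 + u2 ≠ 0),
      Projectivization.mk F u1 h1 = p1 ∧ Projectivization.mk F u2 h2 = p2 ∧
        Projectivization.mk F (u1 + u2) h3 = p3 := by
  obtain ⟨v1, hn1, hmk1⟩ : ∃ v h, Projectivization.mk F v h = p1 :=
    ⟨p1.rep, p1.rep_nonzero, p1.mk_rep⟩
  obtain ⟨v2, hn2, hmk2⟩ : ∃ v h, Projectivization.mk F v h = p2 :=
    ⟨p2.rep, p2.rep_nonzero, p2.mk_rep⟩
  obtain ⟨v3, hn3, hmk3⟩ : ∃ v h, Projectivization.mk F v h = p3 :=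
    ⟨p3.rep, p3.rep_nonzero, p3.mk_rep⟩
  have prop_mk : ∀ (x y : Fin 2 → F) (hx : x ≠ 0) (hy : y ≠ 0) (c : F), c • x = y →
      Projectivization.mk F x hx = Projectivization.mk F y hy := by
    intro x y hx hy c hc
    have hc0 : c ≠ 0 := by rintro rfl; rw [zero_smul] at hc; exact hy hc.symm
    exact (Projectivization.mk_eq_mk_iff' F x y hx hy).mpr
      ⟨c⁻¹, by rw [← hc, smul_smul, inv_mul_cancel₀ hc0, one_smul]⟩
  have hli : LinearIndependent F ![v1, v2] := by
    rw [LinearIndependent.pair_iff' hn1]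
    intro a ha
    exact h12 (by rw [← hmk1, ← hmk2]; exact prop_mk v1 v2 hn1 hn2 a ha)
  have hcard : Fintype.card (Fin 2) = Module.finrank F (Fin 2 → F) := by simp
  obtain ⟨a, b, hsum⟩ : ∃ a b : F, a • v1 + b • v2 = v3 := by
    refine ⟨(basisOfLinearIndependentOfCardEqFinrank hli hcard).repr v3 0,
      (basisOfLinearIndependentOfCardEqFinrank hli hcard).repr v3 1, ?_⟩
    have h1 := (basisOfLinearIndependentOfCardEqFinrank hli hcard).sum_repr v3
    rwa [Fin.sum_univ_two, coe_basisOfLinearIndependentOfCardEqFinrank hli hcard] at h1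
  have ha : a ≠ 0 := by
    rintro rfl
    rw [zero_smul, zero_add] at hsum
    exact h23 (by rw [← hmk2, ← hmk3]; exact prop_mk v2 v3 hn2 hn3 b hsum)
  have hb : b ≠ 0 := by
    rintro rfl
    rw [zero_smul, add_zero] at hsum
    exact h13 (by rw [← hmk1, ← hmk3]; exact prop_mk v1 v3 hn1 hn3 a hsum)
  have hli' : LinearIndependent F ![a • v1, b • v2] := by
    have h2 := hli.units_smul ![Units.mk0 a ha, Units.mk0 b hb]
    convert h2 using 1
    funext i
    fin_cases i <;> simp
  have h1 : a • v1 ≠ 0 := smul_ne_zero ha hn1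
  have h2 : b • v2 ≠ 0 := smul_ne_zero hb hn2
  have h3 : a • v1 + b • v2 ≠ 0 := hsum ▸ hn3
  refine ⟨a • v1, b • v2, hli', h1, h2, h3, ?_, ?_, ?_⟩
  · rw [← hmk1]; exact (prop_mk v1 _ hn1 h1 a rfl).symm
  · rw [← hmk2]; exact (prop_mk v2 _ hn2 h2 b rfl).symm
  · rw [← hmk3]; exact mk_congr h3 hn3 hsum

lemma frame_matrix_isUnit (u1 u2 : Fin 2 → F) (hli : LinearIndependent F ![u1, u2]) :
    IsUnit ((Matrix.of ![u1, u2])ᵀ) := by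
  rw [← Matrix.linearIndependent_cols_iff_isUnit]
  show LinearIndependent F ![u1, u2]
  exact hli

lemma frame_mulVec₀ (u1 u2 : Fin 2 → F) :
    ((Matrix.of ![u1, u2])ᵀ) *ᵥ Pi.single 0 1 = u1 := by
  rw [Matrix.mulVec_single_one]; rfl

lemma frame_mulVec₁ (u1 u2 : Fin 2 → F) :
    ((Matrix.of ![u1, u2])ᵀ) *ᵥ Pi.single 1 1 = u2 := by
  rw [Matrix.mulVec_single_one]; rfl

/-- Given two frames with square determinant ratio, build an `SL₂` element carrying
one frame to a scalar multiple of the other. -/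
lemma build (u1 u2 w1 w2 : Fin 2 → F)
    (hu : LinearIndependent F ![u1, u2]) (hw : LinearIndependent F ![w1, w2])
    (hsq : IsSquare (((Matrix.of ![w1, w2])ᵀ).det * (((Matrix.of ![u1, u2])ᵀ).det)⁻¹)) :
    ∃ (g : Matrix.SpecialLinearGroup (Fin 2) F) (c : F), c ≠ 0 ∧
      (g : Matrix (Fin 2) (Fin 2) F) *ᵥ u1 = c • w1 ∧
      (g : Matrix (Fin 2) (Fin 2) F) *ᵥ u2 = c • w2 := by
  set P := (Matrix.of ![u1, u2])ᵀ with hPdef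
  set Q := (Matrix.of ![w1, w2])ᵀ with hQdef
  have hP : IsUnit P := frame_matrix_isUnit u1 u2 hu
  have hQ : IsUnit Q := frame_matrix_isUnit w1 w2 hw
  have hPd : IsUnit P.det := (Matrix.isUnit_iff_isUnit_det _).mp hP
  have hQd : IsUnit Q.det := (Matrix.isUnit_iff_isUnit_det _).mp hQ
  have hPd0 : P.det ≠ 0 := hPd.ne_zero
  have hQd0 : Q.det ≠ 0 := hQd.ne_zero
  obtain ⟨r, hr⟩ := hsq
  have hr0 : r ≠ 0 := by
    rintro rfl
    rw [mul_zero] at hr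
    exact (mul_ne_zero hQd0 (inv_ne_zero hPd0)) hr
  have hdet : (r⁻¹ • (Q * P⁻¹)).det = 1 := by
    rw [Matrix.det_smul, Matrix.det_mul, Matrix.det_nonsing_inv, Ring.inverse_eq_inv',
      hr, Fintype.card_fin]
    field_simp
  refine ⟨⟨r⁻¹ • (Q * P⁻¹), hdet⟩, r⁻¹, inv_ne_zero hr0, ?_, ?_⟩
  · have : u1 = P *ᵥ Pi.single 0 1 := (frame_mulVec₀ u1 u2).symm
    rw [Matrix.SpecialLinearGroup.coe_mk, this, Matrix.smul_mulVec,
      Matrix.mulVec_mulVec, Matrix.mul_assoc, Matrix.nonsing_inv_mul P hPd,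
      Matrix.mul_one]
    rw [frame_mulVec₀ w1 w2]
  · have : u2 = P *ᵥ Pi.single 1 1 := (frame_mulVec₁ u1 u2).symm
    rw [Matrix.SpecialLinearGroup.coe_mk, this, Matrix.smul_mulVec,
      Matrix.mulVec_mulVec, Matrix.mul_assoc, Matrix.nonsing_inv_mul P hPd,
      Matrix.mul_one]
    rw [frame_mulVec₁ w1 w2]

lemma neg_isSquare_of_not_isSquare [Fintype F] (hq : Fintype.card F % 4 = 3)
    {d : F} (hd : d ≠ 0) (h : ¬IsSquare d) : IsSquare (-d) := by
  classical
  have hneg : ¬IsSquare (-1 : F) := by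
    rw [FiniteField.isSquare_neg_one_iff]
    simp [hq]
  have h1 : quadraticChar F (-1) = -1 := quadraticChar_neg_one_iff_not_isSquare.mpr hneg
  have h2 : quadraticChar F d = -1 := quadraticChar_neg_one_iff_not_isSquare.mpr h
  have h3 : quadraticChar F (-d) = 1 := by
    have : (-d) = (-1) * d := by ring
    rw [this, _root_.map_mul, h1, h2]; ring
  exact (quadraticChar_one_iff_isSquare (neg_ne_zero.mpr hd)).mp h3

/-- Main triple lemma: given two triples of distinct points, some `g ∈ SL₂` maps
the third point to the third point and the first pair onto the other pair
(possibly swapped). -/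
lemma key [Fintype F] (hq : Fintype.card F % 4 = 3)
    (p1 p2 p3 q1 q2 q3 : ℙ F (Fin 2 → F))
    (hp12 : p1 ≠ p2) (hp13 : p1 ≠ p3) (hp23 : p2 ≠ p3)
    (hq12 : q1 ≠ q2) (hq13 : q1 ≠ q3) (hq23 : q2 ≠ q3) :
    ∃ g : Matrix.SpecialLinearGroup (Fin 2) F,
      sl2ProjAction g p3 = q3 ∧
      ((sl2ProjAction g p1 = q1 ∧ sl2ProjAction g p2 = q2) ∨
       (sl2ProjAction g p1 = q2 ∧ sl2ProjAction g p2 = q1)) := by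
  obtain ⟨u1, u2, hu, hu1, hu2, hu3, hmku1, hmku2, hmku3⟩ :=
    exists_frame p1 p2 p3 hp12 hp13 hp23
  obtain ⟨w1, w2, hw, hw1, hw2, hw3, hmkw1, hmkw2, hmkw3⟩ :=
    exists_frame q1 q2 q3 hq12 hq13 hq23
  have hPd0 : ((Matrix.of ![u1, u2])ᵀ).det ≠ 0 :=
    ((Matrix.isUnit_iff_isUnit_det _).mp (frame_matrix_isUnit u1 u2 hu)).ne_zero
  have hQd0 : ((Matrix.of ![w1, w2])ᵀ).det ≠ 0 :=
    ((Matrix.isUnit_iff_isUnit_det _).mp (frame_matrix_isUnit w1 w2 hw)).ne_zero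
  set d : F := ((Matrix.of ![w1, w2])ᵀ).det * (((Matrix.of ![u1, u2])ᵀ).det)⁻¹ with hddef
  have hd0 : d ≠ 0 := mul_ne_zero hQd0 (inv_ne_zero hPd0)
  have hw' : LinearIndependent F ![w2, w1] := by
    rw [LinearIndependent.pair_iff' hw2]
    intro a ha
    have haz : a ≠ 0 := by rintro rfl; rw [zero_smul] at ha; exact hw1 ha.symm
    have : a⁻¹ • w1 = w2 := by rw [← ha, smul_smul, inv_mul_cancel₀ haz, one_smul]
    exact ((LinearIndependent.pair_iff' hw1).mp hw a⁻¹) this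
  -- helper to produce the projective statements from a `build` witness
  have main : ∀ (x1 x2 : Fin 2 → F) (hx1 : x1 ≠ 0) (hx2 : x2 ≠ 0) (hx3 : x1 + x2 ≠ 0)
      (hx : LinearIndependent F ![x1, x2])
      (hs : IsSquare (((Matrix.of ![x1, x2])ᵀ).det * (((Matrix.of ![u1, u2])ᵀ).det)⁻¹)),
      ∃ g : Matrix.SpecialLinearGroup (Fin 2) F,
        sl2ProjAction g p1 = Projectivization.mk F x1 hx1 ∧
        sl2ProjAction g p2 = Projectivization.mk F x2 hx2 ∧
        sl2ProjAction g p3 = Projectivization.mk F (x1 + x2) hx3 := by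
    intro x1 x2 hx1 hx2 hx3 hx hs
    obtain ⟨g, c, hc, hg1, hg2⟩ := build u1 u2 x1 x2 hu hx hs
    have hg3 : (g : Matrix (Fin 2) (Fin 2) F) *ᵥ (u1 + u2) = c • (x1 + x2) := by
      rw [Matrix.mulVec_add, hg1, hg2, smul_add]
    refine ⟨g, ?_, ?_, ?_⟩
    · rw [← hmku1, sl2ProjAction_mk]
      exact (Projectivization.mk_eq_mk_iff' F _ _ _ hx1).mpr ⟨c, hg1.symm⟩
    · rw [← hmku2, sl2ProjAction_mk]
      exact (Projectivization.mk_eq_mk_iff' F _ _ _ hx2).mpr ⟨c, hg2.symm⟩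
    · rw [← hmku3, sl2ProjAction_mk]
      exact (Projectivization.mk_eq_mk_iff' F _ _ _ hx3).mpr ⟨c, hg3.symm⟩
  by_cases hsq : IsSquare d
  · obtain ⟨g, hg1, hg2, hg3⟩ := main w1 w2 hw1 hw2 hw3 hw hsq
    exact ⟨g, by rw [hg3, hmkw3], Or.inl ⟨by rw [hg1, hmkw1], by rw [hg2, hmkw2]⟩⟩
  · have hdetswap : ((Matrix.of ![w2, w1])ᵀ).det = - ((Matrix.of ![w1, w2])ᵀ).det := by
      simp [Matrix.det_fin_two, Matrix.vecHead, Matrix.vecTail]; ring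
    have hsq' : IsSquare (((Matrix.of ![w2, w1])ᵀ).det * (((Matrix.of ![u1, u2])ᵀ).det)⁻¹) := by
      rw [hdetswap, neg_mul, ← hddef]
      exact neg_isSquare_of_not_isSquare hq hd0 hsq
    have hw3' : w2 + w1 ≠ 0 := by rwa [add_comm]
    obtain ⟨g, hg1, hg2, hg3⟩ := main w2 w1 hw2 hw1 hw3' hw' hsq'
    refine ⟨g, ?_, Or.inr ⟨by rw [hg1, hmkw2], by rw [hg2, hmkw1]⟩⟩
    rw [hg3, ← hmkw3]
    exact (Projectivization.mk_eq_mk_iff F _ _ _ _).mpr ⟨1, by simp [add_comm]⟩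

end PSL2Aux

open PSL2Aux Projectivization

/-- For a prime power `q ≡ 3 (mod 4)`, the action of `SL₂(F_q)` (equivalently of
`PSL₂(F_q)`) on the projective line `ℙ¹(F_q)` is `(q-2,2,1)`-transitive: any ordered
set partition of `ℙ¹(F_q)` into parts of sizes `q-2`, `2`, `1` can be carried to any
other such partition by the action of some `g ∈ SL₂(F_q)`. -/
theorem psl2_q3mod4_transitive (F : Type) [Field F] [Fintype F]
    (hq : Fintype.card F % 4 = 3)
    (A B : Fin 3 → Set (ℙ F (Fin 2 → F)))
    (hAdisj : ∀ i j, i ≠ j → Disjoint (A i) (A j))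
    (hBdisj : ∀ i j, i ≠ j → Disjoint (B i) (B j))
    (hAunion : (⋃ i, A i) = Set.univ) (hBunion : (⋃ i, B i) = Set.univ)
    (hA0 : (A 0).ncard = Fintype.card F - 2) (hB0 : (B 0).ncard = Fintype.card F - 2)
    (hA1 : (A 1).ncard = 2) (hB1 : (B 1).ncard = 2)
    (hA2 : (A 2).ncard = 1) (hB2 : (B 2).ncard = 1) :
    ∃ g : Matrix.SpecialLinearGroup (Fin 2) F,
      ∀ i, sl2ProjAction g '' A i = B i := by
  obtain ⟨a1, a2, ha12, hA1eq⟩ := Set.ncard_eq_two.mp hA1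
  obtain ⟨a3, hA2eq⟩ := Set.ncard_eq_one.mp hA2
  obtain ⟨b1, b2, hb12, hB1eq⟩ := Set.ncard_eq_two.mp hB1
  obtain ⟨b3, hB2eq⟩ := Set.ncard_eq_one.mp hB2
  have ha13 : a1 ≠ a3 := by
    intro h
    exact (hAdisj 1 2 (by decide)).ne_of_mem (hA1eq ▸ Set.mem_insert _ _)
      (hA2eq ▸ Set.mem_singleton _) h
  have ha23 : a2 ≠ a3 := by
    intro h
    exact (hAdisj 1 2 (by decide)).ne_of_mem
      (hA1eq ▸ Set.mem_insert_of_mem _ rfl) (hA2eq ▸ Set.mem_singleton _) h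
  have hb13 : b1 ≠ b3 := by
    intro h
    exact (hBdisj 1 2 (by decide)).ne_of_mem (hB1eq ▸ Set.mem_insert _ _)
      (hB2eq ▸ Set.mem_singleton _) h
  have hb23 : b2 ≠ b3 := by
    intro h
    exact (hBdisj 1 2 (by decide)).ne_of_mem
      (hB1eq ▸ Set.mem_insert_of_mem _ rfl) (hB2eq ▸ Set.mem_singleton _) h
  obtain ⟨g, hg3, hg12⟩ := key hq a1 a2 a3 b1 b2 b3 ha12 ha13 ha23 hb12 hb13 hb23
  have hbij := sl2ProjAction_bijective g
  have hcomplA : A 0 = (A 1 ∪ A 2)ᶜ := by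
    ext x
    constructor
    · intro hx
      simp only [Set.mem_compl_iff, Set.mem_union, not_or]
      exact ⟨fun h => (hAdisj 0 1 (by decide)).ne_of_mem hx h rfl,
        fun h => (hAdisj 0 2 (by decide)).ne_of_mem hx h rfl⟩
    · intro hx
      simp only [Set.mem_compl_iff, Set.mem_union, not_or] at hx
      have : x ∈ ⋃ i, A i := hAunion ▸ Set.mem_univ x
      obtain ⟨i, hi⟩ := Set.mem_iUnion.mp this
      fin_cases i
      · exact hi
      · exact absurd hi hx.1
      · exact absurd hi hx.2
  have hcomplB : B 0 = (B 1 ∪ B 2)ᶜ := by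
    ext x
    constructor
    · intro hx
      simp only [Set.mem_compl_iff, Set.mem_union, not_or]
      exact ⟨fun h => (hBdisj 0 1 (by decide)).ne_of_mem hx h rfl,
        fun h => (hBdisj 0 2 (by decide)).ne_of_mem hx h rfl⟩
    · intro hx
      simp only [Set.mem_compl_iff, Set.mem_union, not_or] at hx
      have : x ∈ ⋃ i, B i := hBunion ▸ Set.mem_univ x
      obtain ⟨i, hi⟩ := Set.mem_iUnion.mp this
      fin_cases i
      · exact hi
      · exact absurd hi hx.1
      · exact absurd hi hx.2
  have him1 : sl2ProjAction g '' A 1 = B 1 := by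
    rw [hA1eq, hB1eq, Set.image_pair]
    rcases hg12 with ⟨h1, h2⟩ | ⟨h1, h2⟩
    · rw [h1, h2]
    · rw [h1, h2, Set.pair_comm]
  have him2 : sl2ProjAction g '' A 2 = B 2 := by
    rw [hA2eq, hB2eq, Set.image_singleton, hg3]
  refine ⟨g, fun i => ?_⟩
  fin_cases i
  · show sl2ProjAction g '' A 0 = B 0
    rw [hcomplA, hcomplB, Set.image_compl_eq hbij, Set.image_union, him1, him2]
  · exact him1
  · exact him2
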